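/- If the interaction energy is a constant J on every edge and every magnetic field vector is M_i = k_i·B for a fixed vector B ∈ ℂ^q and positive integers k_i, then Z(G) = (e^{βJ} − 1)^{|V(G)|} · W(G, ω; {x_k}_{k∈ℤ⁺}, e^{βJ}), where the vertex weight of v_i is the integer k_i and x_k = (Σ_{α=1}^q e^{β k B_α}) / (e^{βJ} − 1). -/

import Mathlib

open Finset

structure WGraph (S : Type) (L : Type) where
  V : Type
  E : Type
  [fV : Fintype V]
  [dV : DecidableEq V]
  [fE : Fintype E]
  [dE : DecidableEq E]
  ends : E → V × V
  ω : V → S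
  γ : E → L

attribute [instance] WGraph.fV WGraph.dV WGraph.fE WGraph.dE

namespace WGraph
variable {S L : Type}

def IsLoop (G : WGraph S L) (e : G.E) : Prop := (G.ends e).1 = (G.ends e).2

def delete (G : WGraph S L) (e₀ : G.E) : WGraph S L where
  V := G.V
  E := {e : G.E // e ≠ e₀}
  ends := fun e => G.ends e.1
  ω := G.ω
  γ := fun e => G.γ e.1

def contract [Add S] (G : WGraph S L) (e₀ : G.E) (h : ¬ G.IsLoop e₀) : WGraph S L where
  V := {v : G.V // v ≠ (G.ends e₀).2}
  E := {e : G.E // e ≠ e₀}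
  ends := fun e =>
    ((if hv : (G.ends e.1).1 = (G.ends e₀).2 then ⟨(G.ends e₀).1, h⟩
        else ⟨(G.ends e.1).1, hv⟩ : {v : G.V // v ≠ (G.ends e₀).2}),
     (if hv : (G.ends e.1).2 = (G.ends e₀).2 then ⟨(G.ends e₀).1, h⟩
        else ⟨(G.ends e.1).2, hv⟩))
  ω := fun v =>
    if v.1 = (G.ends e₀).1 then G.ω (G.ends e₀).1 + G.ω (G.ends e₀).2 else G.ω v.1
  γ := fun e => G.γ e.1

def mapEdges {L' : Type} (G : WGraph S L) (φ : L → L') : WGraph S L' where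
  V := G.V
  E := G.E
  ends := G.ends
  ω := G.ω
  γ := φ ∘ G.γ

def stateGraph (G : WGraph S L) (A : Finset G.E) : SimpleGraph G.V :=
  SimpleGraph.fromRel (fun v w => ∃ e ∈ A, G.ends e = (v, w))

noncomputable instance (G : WGraph S L) (A : Finset G.E) :
    Fintype (G.stateGraph A).ConnectedComponent := Fintype.ofFinite _

noncomputable def kcomp (G : WGraph S L) (A : Finset G.E) : ℕ :=
  Fintype.card (G.stateGraph A).ConnectedComponent

open scoped Classical in
noncomputable def compWeight [AddCommMonoid S] (G : WGraph S L) (A : Finset G.E)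
    (c : (G.stateGraph A).ConnectedComponent) : S :=
  ∑ v ∈ Finset.univ.filter (fun v => (G.stateGraph A).connectedComponentMk v = c), G.ω v

end WGraph

namespace PottsAux

open WGraph

noncomputable def Z (q : ℕ) (β : ℂ) (B : Fin q → ℂ) (y : ℂ) (G : WGraph ℕ+ Unit) : ℂ :=
  ∑ σ : G.V → Fin q,
    (∏ e : G.E, if σ (G.ends e).1 = σ (G.ends e).2 then y else 1) *
      ∏ v : G.V, Complex.exp (β * ((G.ω v : ℕ) : ℂ) * B (σ v))

lemma subProd {α : Type} [Fintype α] [DecidableEq α] (e₀ : α) (f : α → ℂ) :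
    ∏ e : {e // e ≠ e₀}, f e.1 = ∏ e ∈ Finset.univ.erase e₀, f e :=
  (Finset.prod_subtype _ (by simp) f).symm

lemma Z_empty (q : ℕ) (β : ℂ) (B : Fin q → ℂ) (y : ℂ) (G : WGraph ℕ+ Unit)
    (hE : IsEmpty G.E) :
    Z q β B y G = ∏ v : G.V, ∑ α : Fin q, Complex.exp (β * ((G.ω v : ℕ) : ℂ) * B α) := by
  unfold Z
  rw [Finset.prod_univ_sum, Fintype.piFinset_univ]
  refine Finset.sum_congr rfl fun σ _ => ?_
  rw [Finset.univ_eq_empty, Finset.prod_empty, one_mul]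

lemma Z_loop (q : ℕ) (β : ℂ) (B : Fin q → ℂ) (y : ℂ) (G : WGraph ℕ+ Unit)
    (e₀ : G.E) (h : G.IsLoop e₀) :
    Z q β B y G = y * Z q β B y (G.delete e₀) := by
  unfold Z
  rw [Finset.mul_sum]
  refine Finset.sum_congr rfl fun σ _ => ?_
  rw [← Finset.mul_prod_erase Finset.univ _ (Finset.mem_univ e₀),
    if_pos (congrArg σ h), ← subProd e₀, mul_assoc]
  rfl

lemma Z_nonloop (q : ℕ) (β : ℂ) (B : Fin q → ℂ) (y : ℂ) (G : WGraph ℕ+ Unit)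
    (e₀ : G.E) (h : ¬ G.IsLoop e₀) :
    Z q β B y G = Z q β B y (G.delete e₀) + (y - 1) * Z q β B y (G.contract e₀ h) := by
  classical
  have huv : (G.ends e₀).1 ≠ (G.ends e₀).2 := h
  have step1 : Z q β B y G = Z q β B y (G.delete e₀) +
      (y - 1) * ∑ σ ∈ Finset.univ.filter
          (fun σ : G.V → Fin q => σ (G.ends e₀).1 = σ (G.ends e₀).2),
        ((∏ e : {e : G.E // e ≠ e₀}, if σ (G.ends e.1).1 = σ (G.ends e.1).2 then y else 1) *
          ∏ v : G.V, Complex.exp (β * ((G.ω v : ℕ) : ℂ) * B (σ v))) := by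
    have hdel : Z q β B y (G.delete e₀) = ∑ σ : G.V → Fin q,
        (∏ e : {e : G.E // e ≠ e₀}, if σ (G.ends e.1).1 = σ (G.ends e.1).2 then y else 1) *
          ∏ v : G.V, Complex.exp (β * ((G.ω v : ℕ) : ℂ) * B (σ v)) := rfl
    rw [hdel]
    unfold Z
    rw [Finset.mul_sum, Finset.sum_filter, ← Finset.sum_add_distrib]
    refine Finset.sum_congr rfl fun σ _ => ?_
    rw [← Finset.mul_prod_erase Finset.univ _ (Finset.mem_univ e₀), ← subProd e₀]
    split <;> ring
  rw [step1]
  congr 2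
  refine Finset.sum_bij'
    (i := fun (σ : G.V → Fin q) _ => fun v : (G.contract e₀ h).V => σ v.1)
    (j := fun (τ : (G.contract e₀ h).V → Fin q) _ => fun v : G.V =>
      if hv : v = (G.ends e₀).2 then τ ⟨(G.ends e₀).1, huv⟩ else τ ⟨v, hv⟩)
    ?_ ?_ ?_ ?_ ?_
  · intro σ hσ
    exact Finset.mem_univ _
  · intro τ _
    simp only [Finset.mem_filter, Finset.mem_univ, true_and]
    simp [huv]
  · intro σ hσ
    simp only [Finset.mem_filter, Finset.mem_univ, true_and] at hσ
    funext v
    by_cases hv : v = (G.ends e₀).2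
    · subst hv; simpa using hσ
    · simp [hv]
  · intro τ _
    funext v
    simp [v.2]
    rfl
  · intro σ hσ
    simp only [Finset.mem_filter, Finset.mem_univ, true_and] at hσ
    have hends : ∀ e : {e : G.E // e ≠ e₀},
        σ (((G.contract e₀ h).ends e).1 : {v : G.V // v ≠ (G.ends e₀).2}).1
            = σ (G.ends e.1).1 ∧
        σ (((G.contract e₀ h).ends e).2 : {v : G.V // v ≠ (G.ends e₀).2}).1
            = σ (G.ends e.1).2 := by
      intro e
      constructor <;>
      · show σ (Subtype.val (dite _ _ _)) = _
        split
        · rename_i hv; rw [hσ, ← hv]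
        · rfl
    congr 1
    · refine Finset.prod_congr rfl fun e _ => ?_
      simp only [(hends e).1, (hends e).2]
    · -- vertex products
      rw [← Finset.mul_prod_erase Finset.univ _ (Finset.mem_univ (G.ends e₀).2),
        ← subProd (G.ends e₀).2 (fun v => Complex.exp (β * ((G.ω v : ℕ) : ℂ) * B (σ v)))]
      have hu : ((⟨(G.ends e₀).1, huv⟩ : {v : G.V // v ≠ (G.ends e₀).2})) ∈
          (Finset.univ : Finset {v : G.V // v ≠ (G.ends e₀).2}) := Finset.mem_univ _
      rw [← Finset.mul_prod_erase Finset.univ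
        (fun v : {v : G.V // v ≠ (G.ends e₀).2} =>
          Complex.exp (β * ((G.ω v.1 : ℕ) : ℂ) * B (σ v.1))) hu,
        ← Finset.mul_prod_erase Finset.univ
        (fun v : (G.contract e₀ h).V =>
          Complex.exp (β * (((G.contract e₀ h).ω v : ℕ) : ℂ) * B ((fun v : (G.contract e₀ h).V => σ v.1) v))) hu]
      rw [← mul_assoc]
      congr 1
      · -- combined weight at the merged vertex
        show Complex.exp _ * Complex.exp _ =
          Complex.exp (β * ((((if (G.ends e₀).1 = (G.ends e₀).1 then
            G.ω (G.ends e₀).1 + G.ω (G.ends e₀).2 else G.ω (G.ends e₀).1) : ℕ+) : ℕ) : ℂ) * B (σ (G.ends e₀).1))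
        rw [if_pos rfl, ← Complex.exp_add, hσ]
        congr 1
        push_cast [PNat.add_coe]
        ring
      · refine Finset.prod_congr rfl fun v hv => ?_
        have hv1 : v.1 ≠ (G.ends e₀).1 := by
          intro hc
          exact (Finset.mem_erase.mp hv).1 (Subtype.ext hc)
        show Complex.exp _ = Complex.exp (β * (((if v.1 = (G.ends e₀).1 then
            G.ω (G.ends e₀).1 + G.ω (G.ends e₀).2 else G.ω v.1 : ℕ+) : ℕ) : ℂ) * B (σ v.1))
        rw [if_neg hv1]

end PottsAux

/-- with constant interaction energy `J` and magnetic field vectors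
`M_i = k_i·B` (`k_i ∈ ℤ⁺`, `B ∈ ℂ^q` fixed), the Potts partition function equals
`(e^{βJ}-1)^{|V(G)|} W(G,ω;{x_k},e^{βJ})` with vertex weights `ω(v_i) = k_i` and
`x_k = (Σ_α e^{βkB_α})/(e^{βJ}-1)`. -/
theorem pottsZ_integer_scaled_field_eq_W (q : ℕ) (β J : ℂ) (B : Fin q → ℂ)
    (hJ : Complex.exp (β * J) ≠ 1) (W : WGraph ℕ+ Unit → ℂ)
    (hW1 : ∀ (G : WGraph ℕ+ Unit) (e : G.E) (h : ¬ G.IsLoop e),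
      W G = W (G.delete e) + W (G.contract e h))
    (hW2 : ∀ (G : WGraph ℕ+ Unit) (e : G.E), G.IsLoop e →
      W G = Complex.exp (β * J) * W (G.delete e))
    (hW3 : ∀ G : WGraph ℕ+ Unit, IsEmpty G.E →
      W G = ∏ v : G.V,
        ((∑ α : Fin q, Complex.exp (β * ((G.ω v : ℕ) : ℂ) * B α)) /
          (Complex.exp (β * J) - 1))) :
    ∀ G : WGraph ℕ+ Unit,
      (∑ σ : G.V → Fin q, Complex.exp (-β *
        (-(J * ∑ e : G.E, if σ (G.ends e).1 = σ (G.ends e).2 then (1 : ℂ) else 0)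
          - ∑ v : G.V, ∑ α : Fin q,
              ((G.ω v : ℕ) : ℂ) * B α * (if α = σ v then 1 else 0)))) =
      (Complex.exp (β * J) - 1) ^ (Fintype.card G.V) * W G := by
  classical
  intro G
  have hy : Complex.exp (β * J) - 1 ≠ 0 := sub_ne_zero.mpr hJ
  have key : ∀ n : ℕ, ∀ G' : WGraph ℕ+ Unit, Fintype.card G'.E = n →
      PottsAux.Z q β B (Complex.exp (β * J)) G' =
        (Complex.exp (β * J) - 1) ^ (Fintype.card G'.V) * W G' := by
    intro n
    induction n using Nat.strong_induction_on with
    | _ n ih =>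
      intro G' hn
      rcases isEmpty_or_nonempty G'.E with hE | hE
      · rw [PottsAux.Z_empty _ _ _ _ _ hE, hW3 G' hE, Finset.prod_div_distrib,
          Finset.prod_const, Finset.card_univ, mul_div_cancel₀ _ (pow_ne_zero _ hy)]
      · obtain ⟨e₀⟩ := hE
        have hcard : Fintype.card {e : G'.E // e ≠ e₀} < n := by
          subst hn
          exact Fintype.card_subtype_lt (x := e₀) (by simp)
        by_cases hloop : G'.IsLoop e₀
        · rw [PottsAux.Z_loop _ _ _ _ _ e₀ hloop, hW2 G' e₀ hloop,
            ih _ hcard (G'.delete e₀) rfl]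
          have hVd : Fintype.card (G'.delete e₀).V = Fintype.card G'.V := rfl
          rw [hVd]
          ring
        · rw [PottsAux.Z_nonloop _ _ _ _ _ e₀ hloop, hW1 G' e₀ hloop,
            ih _ hcard (G'.delete e₀) rfl, ih _ hcard (G'.contract e₀ hloop) rfl]
          have hVd : Fintype.card (G'.delete e₀).V = Fintype.card G'.V := rfl
          have hV : Fintype.card G'.V = Fintype.card (G'.contract e₀ hloop).V + 1 := by
            show Fintype.card G'.V = Fintype.card {v : G'.V // v ≠ (G'.ends e₀).2} + 1
            have h1 : Fintype.card {v : G'.V // v ≠ (G'.ends e₀).2} =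
                Fintype.card G'.V - 1 := by
              have h3 := Fintype.card_subtype_compl (fun v : G'.V => v = (G'.ends e₀).2)
              rwa [Fintype.card_subtype_eq] at h3
            have h2 : 0 < Fintype.card G'.V := Fintype.card_pos_iff.mpr ⟨(G'.ends e₀).2⟩
            omega
          rw [hVd, hV]
          ring
  have hzeq : (∑ σ : G.V → Fin q, Complex.exp (-β *
        (-(J * ∑ e : G.E, if σ (G.ends e).1 = σ (G.ends e).2 then (1 : ℂ) else 0)
          - ∑ v : G.V, ∑ α : Fin q,
              ((G.ω v : ℕ) : ℂ) * B α * (if α = σ v then 1 else 0)))) =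
      PottsAux.Z q β B (Complex.exp (β * J)) G := by
    unfold PottsAux.Z
    refine Finset.sum_congr rfl fun σ _ => ?_
    have harg : -β *
        (-(J * ∑ e : G.E, if σ (G.ends e).1 = σ (G.ends e).2 then (1 : ℂ) else 0)
          - ∑ v : G.V, ∑ α : Fin q,
              ((G.ω v : ℕ) : ℂ) * B α * (if α = σ v then 1 else 0)) =
        (∑ e : G.E, β * J * (if σ (G.ends e).1 = σ (G.ends e).2 then (1 : ℂ) else 0))
          + (∑ v : G.V, β * (((G.ω v : ℕ) : ℂ) * B (σ v))) := by
      have hv : ∀ v : G.V, (∑ α : Fin q,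
          ((G.ω v : ℕ) : ℂ) * B α * (if α = σ v then 1 else 0)) =
          ((G.ω v : ℕ) : ℂ) * B (σ v) := by
        intro v; simp
      rw [Finset.sum_congr rfl (fun v _ => hv v), ← Finset.mul_sum, ← Finset.mul_sum]
      ring
    rw [harg, Complex.exp_add, Complex.exp_sum, Complex.exp_sum]
    congr 1
    · refine Finset.prod_congr rfl fun e _ => ?_
      split <;> simp
    · refine Finset.prod_congr rfl fun v _ => ?_
      rw [mul_assoc]
  rw [hzeq]
  exact key _ G rfl
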